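/- Let G be a Hausdorff topological group and H a closed subgroup of G that is cocompact in G, i.e. there exists a compact subset K ⊆ G such that G = HK = {hk : h ∈ H, k ∈ K}. Then G is compactly generated if and only if H is compactly generated. -/

import Mathlib

/-- A topological group is *compactly generated* if it is generated, as an abstract group, by
some compact subset. -/
def IsCompactlyGeneratedGroup (G : Type*) [Group G] [TopologicalSpace G] : Prop :=
  ∃ S : Set G, IsCompact S ∧ Subgroup.closure S = ⊤

open scoped Pointwise

/-- a Hausdorff topological group is compactly generated if and only if a given
closed cocompact subgroup is compactly generated. -/
theorem isCompactlyGeneratedGroup_iff_cocompact_subgroup {G : Type*} [Group G]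
    [TopologicalSpace G] [IsTopologicalGroup G] [T2Space G]
    (H : Subgroup G) (hclosed : IsClosed (H : Set G))
    (K : Set G) (hK : IsCompact K) (hHK : (H : Set G) * K = Set.univ) :
    IsCompactlyGeneratedGroup G ↔ IsCompactlyGeneratedGroup H := by
  constructor
  · rintro ⟨S, hS, hStop⟩
    -- enlarge K and S
    set K' : Set G := K ∪ {1} with hK'def
    have hK'cpt : IsCompact K' := hK.union isCompact_singleton
    have h1K' : (1 : G) ∈ K' := Or.inr rfl
    set S' : Set G := S ∪ S⁻¹ ∪ {1} with hS'def
    have hS'cpt : IsCompact S' := (hS.union hS.inv).union isCompact_singleton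
    have h1S' : (1 : G) ∈ S' := Or.inr rfl
    -- the candidate generating set of H
    set T : Set G := (K' * S' * K'⁻¹) ∩ (H : Set G) with hTdef
    have hTcpt : IsCompact T :=
      (((hK'cpt.mul hS'cpt).mul hK'cpt.inv).inter_right hclosed)
    have hTH : T ⊆ (H : Set G) := Set.inter_subset_right
    set L : Subgroup G := Subgroup.closure T with hLdef
    have hLH : L ≤ H := (Subgroup.closure_le H).2 hTH
    -- key decomposition lemma
    have key : ∀ g : G, ∃ l ∈ L, ∃ k ∈ K', g = l * k := by
      intro g
      have hg : g ∈ Subgroup.closure S := by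
        rw [hStop]; trivial
      have step : ∀ x : G, (∃ l ∈ L, ∃ k ∈ K', x = l * k) → ∀ s ∈ S', 
          ∃ l ∈ L, ∃ k ∈ K', x * s = l * k := by
        rintro x ⟨l, hl, k, hk, rfl⟩ s hs
        have : k * s ∈ (H : Set G) * K := by rw [hHK]; trivial
        obtain ⟨h, hh, k', hk', hks⟩ := this
        have hhT : h ∈ T := by
          refine ⟨⟨k * s, Set.mul_mem_mul hk hs, k'⁻¹, Set.inv_mem_inv.2 (Or.inl hk'), ?_⟩, hh⟩
          rw [← hks]; group
        refine ⟨l * h, mul_mem hl (Subgroup.subset_closure hhT), k', Or.inl hk', ?_⟩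
        rw [mul_assoc, mul_assoc, ← hks]
      induction hg using Subgroup.closure_induction_right with
      | one => exact ⟨1, one_mem _, 1, h1K', (one_mul 1).symm⟩
      | mul_right x hx y hy ih => exact step x ih y (Or.inl (Or.inl hy))
      | mul_inv_cancel x hx y hy ih =>
          exact step x ih y⁻¹ (Or.inl (Or.inr (Set.inv_mem_inv.2 hy)))
    -- H ≤ L
    have hHL : (H : Set G) ⊆ (L : Set G) := by
      intro h hh
      obtain ⟨l, hl, k, hk, rfl⟩ := key h
      have hkH : k ∈ H := by
        have : l ∈ H := hLH hl
        have := mul_mem (inv_mem this) hh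
        simpa using this
      have hkT : k ∈ T := by
        refine ⟨⟨k * 1, Set.mul_mem_mul hk h1S', 1⁻¹, Set.inv_mem_inv.2 h1K', by group⟩, hkH⟩
      exact mul_mem hl (Subgroup.subset_closure hkT)
    -- now transfer T to a compact subset of H
    refine ⟨Subtype.val ⁻¹' T, ?_, ?_⟩
    · have := hclosed.isClosedEmbedding_subtypeVal.isProperMap.isCompact_preimage hTcpt
      exact this
    · rw [eq_top_iff]
      rintro ⟨h, hh⟩ -
      have h1 : h ∈ Subgroup.map H.subtype (Subgroup.closure (Subtype.val ⁻¹' T)) := by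
        rw [MonoidHom.map_closure]
        have himg : H.subtype '' (Subtype.val ⁻¹' T) = T := by
          ext x
          constructor
          · rintro ⟨y, hy, rfl⟩; exact hy
          · intro hx; exact ⟨⟨x, hTH hx⟩, hx, rfl⟩
        rw [himg]
        exact hHL hh
      obtain ⟨y, hy, hyx⟩ := h1
      have : y = ⟨h, hh⟩ := Subtype.ext hyx
      rwa [this] at hy
  · rintro ⟨T, hT, hTtop⟩
    refine ⟨Subtype.val '' T ∪ K, (hT.image continuous_subtype_val).union hK, ?_⟩
    rw [eq_top_iff]
    rintro g -
    have : g ∈ (H : Set G) * K := by rw [hHK]; trivial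
    obtain ⟨h, hh, k, hk, rfl⟩ := this
    have hhmem : h ∈ Subgroup.closure (Subtype.val '' T) := by
      have : (⟨h, hh⟩ : H) ∈ Subgroup.closure T := by rw [hTtop]; trivial
      have h2 : h ∈ Subgroup.map H.subtype (Subgroup.closure T) :=
        ⟨⟨h, hh⟩, this, rfl⟩
      rwa [MonoidHom.map_closure] at h2
    exact mul_mem
      (Subgroup.closure_mono Set.subset_union_left hhmem)
      (Subgroup.subset_closure (Or.inr hk))
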